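/- (Key step of Theorem 1) Let Y and X be measurable maps from Ω into standard Borel spaces, let T : Ω → {0,1} ⊆ ℝ be measurable, and let 𝓜 ⊆ σ(X) be a sub-σ-algebra. Assume Y ⊥⊥ T | σ(X). Then Y ⊥⊥ T | 𝓜 if and only if for every bounded measurable real-valued function h, E[h(Y) | 𝓜] · E[T | 𝓜] = E[ E[h(Y) | σ(X)] · E[T | σ(X)] | 𝓜 ] μ-almost surely. -/

import Mathlib

open MeasureTheory ProbabilityTheory Filter

section Aux

lemma integrable_of_bdd {Ω : Type*} {mΩ : MeasurableSpace Ω} {μ : Measure Ω}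
    [IsFiniteMeasure μ] {f : Ω → ℝ} (hf : AEStronglyMeasurable f μ)
    {C : ℝ} (hC : ∀ x, |f x| ≤ C) : Integrable f μ :=
  memLp_one_iff_integrable.mp <| MemLp.of_bound hf C <| Eventually.of_forall fun x => by
    simpa [Real.norm_eq_abs] using hC x

/-- Auxiliary approximation lemma: if the product formula for conditional expectations holds
for indicators of `mY`-measurable sets (against a `{0,1}`-like `T`), it holds for all bounded
`mY`-strongly measurable functions. -/
lemma keyA_aux {Ω : Type*} {mΩ M mY : MeasurableSpace Ω} {μ : @Measure Ω mΩ}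
    [IsFiniteMeasure μ]
    (hM : M ≤ mΩ) (hYle : mY ≤ mΩ)
    (T : Ω → ℝ) (hT : Measurable[mΩ] T) (hT01 : ∀ ω, T ω = 0 ∨ T ω = 1)
    (hTabs : ∀ ω, |T ω| ≤ 1)
    (hTcond_bound : ∀ᵐ ω ∂μ, ‖(μ[T|M]) ω‖ ≤ 1)
    (base : ∀ s : Set Ω, MeasurableSet[mY] s →
      μ[Set.indicator (s ∩ T ⁻¹' {1}) (fun ω => (1:ℝ)) | M] =ᵐ[μ]
        fun ω => (μ[Set.indicator s (fun ω => (1:ℝ)) | M]) ω * (μ[T|M]) ω)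
    (f : Ω → ℝ) (hf : StronglyMeasurable[mY] f) (C : ℝ) (hC : ∀ ω, ‖f ω‖ ≤ C) :
    μ[fun ω => f ω * T ω | M] =ᵐ[μ] fun ω => (μ[f|M]) ω * (μ[T|M]) ω := by
  have hφ_meas : ∀ φ : @SimpleFunc Ω mY ℝ, Measurable[mΩ] ⇑φ :=
    fun φ => (φ.measurable).mono hYle le_rfl
  have hφ_int : ∀ φ : @SimpleFunc Ω mY ℝ, Integrable ⇑φ μ := by
    intro φ
    obtain ⟨Cf, hCf⟩ := φ.exists_forall_norm_le
    exact integrable_of_bdd (hφ_meas φ).aestronglyMeasurable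
      (C := Cf) fun x => by simpa [Real.norm_eq_abs] using hCf x
  have hφT_int : ∀ φ : @SimpleFunc Ω mY ℝ,
      Integrable (fun ω => φ ω * T ω) μ := by
    intro φ
    obtain ⟨Cf, hCf⟩ := φ.exists_forall_norm_le
    refine integrable_of_bdd ((hφ_meas φ).mul hT).aestronglyMeasurable (C := Cf) fun x => ?_
    calc |φ x * T x| = |φ x| * |T x| := abs_mul _ _
      _ ≤ Cf * 1 := mul_le_mul (by simpa [Real.norm_eq_abs] using hCf x) (hTabs x)
          (abs_nonneg _) ((norm_nonneg (φ x)).trans (hCf x))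
      _ = Cf := mul_one _
  -- the claim for simple functions measurable w.r.t. mY
  have hQ : ∀ φ : @SimpleFunc Ω mY ℝ,
      μ[fun ω => φ ω * T ω | M] =ᵐ[μ] fun ω => (μ[⇑φ | M]) ω * (μ[T|M]) ω := by
    intro φ
    refine SimpleFunc.induction ?_ ?_ φ
    · -- indicator case
      intro c s hs
      have hbase := base s hs
      have e1 : (fun ω => (SimpleFunc.piecewise s hs (SimpleFunc.const Ω c)
            (SimpleFunc.const Ω 0)) ω * T ω)
          = fun ω => c • Set.indicator (s ∩ T ⁻¹' {1}) (fun _ => (1:ℝ)) ω := by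
        funext ω
        rcases hT01 ω with h' | h' <;> by_cases hy : ω ∈ s <;>
          simp [SimpleFunc.piecewise_apply, Set.indicator_apply, hy, h', Set.mem_preimage]
      have e2 : ⇑(SimpleFunc.piecewise s hs (SimpleFunc.const Ω c) (SimpleFunc.const Ω 0))
          = fun ω => c • Set.indicator s (fun _ => (1:ℝ)) ω := by
        funext ω
        by_cases hy : ω ∈ s <;> simp [SimpleFunc.piecewise_apply, Set.indicator_apply, hy]
      rw [e1, e2]
      have l1 : μ[fun ω => c • Set.indicator (s ∩ T ⁻¹' {1}) (fun _ => (1:ℝ)) ω | M]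
          =ᵐ[μ] c • μ[Set.indicator (s ∩ T ⁻¹' {1}) (fun ω => (1:ℝ)) | M] :=
        condExp_smul c _ M
      have l2 : μ[fun ω => c • Set.indicator s (fun _ => (1:ℝ)) ω | M]
          =ᵐ[μ] c • μ[Set.indicator s (fun ω => (1:ℝ)) | M] :=
        condExp_smul c _ M
      filter_upwards [l1, l2, hbase] with ω w1 w2 w3
      simp only [Pi.smul_apply, smul_eq_mul] at w1 w2 w3 ⊢
      rw [w1, w2, w3]
      ring
    · -- additivity
      intro f g _ hf hg
      have hsum : μ[⇑(f + g) | M] =ᵐ[μ] μ[⇑f | M] + μ[⇑g | M] := by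
        rw [SimpleFunc.coe_add]
        exact condExp_add (hφ_int f) (hφ_int g) M
      have step : μ[fun ω => (⇑(f + g)) ω * T ω | M]
          =ᵐ[μ] μ[fun ω => f ω * T ω | M] + μ[fun ω => g ω * T ω | M] := by
        have : (fun ω => (⇑(f + g)) ω * T ω)
            = (fun ω => f ω * T ω) + fun ω => g ω * T ω := by
          funext ω; simp [add_mul]
        rw [this]
        exact condExp_add (hφT_int f) (hφT_int g) M
      filter_upwards [step, hf, hg, hsum] with ω e1 e2 e3 e4
      simp only [Pi.add_apply] at e1 e4
      rw [e1, e2, e3, e4]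
      ring
  -- approximation of f by mY-simple functions
  have hC0 : ∀ ω, ‖f ω‖ ≤ max C 0 := fun ω => (hC ω).trans (le_max_left _ _)
  set fs := hf.approxBounded (max C 0) with hfs_def
  have hfs_bound : ∀ n x, ‖fs n x‖ ≤ max C 0 := hf.norm_approxBounded_le (le_max_right C 0)
  have hfs_tend : ∀ᵐ x ∂μ, Tendsto (fun n => fs n x) atTop (nhds (f x)) :=
    hf.tendsto_approxBounded_ae (Eventually.of_forall hC0)
  have hf_int : Integrable f μ :=
    integrable_of_bdd (hf.mono hYle).aestronglyMeasurable
      (C := C) fun x => by simpa [Real.norm_eq_abs] using hC x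
  have hcondT_meas : AEStronglyMeasurable[mΩ] (μ[T|M]) μ :=
    ((stronglyMeasurable_condExp (m := M) (μ := μ) (f := T)).mono hM).aestronglyMeasurable
  have main : μ[fun ω => f ω * T ω | M] =ᵐ[μ] μ[fun ω => (μ[T|M]) ω * f ω | M] := by
    refine tendsto_condExp_unique (fun n ω => fs n ω * T ω)
      (fun n ω => (μ[T|M]) ω * fs n ω)
      (fun ω => f ω * T ω) (fun ω => (μ[T|M]) ω * f ω)
      (fun n => hφT_int (fs n))
      (fun n => (hφ_int (fs n)).bdd_mul hcondT_meas hTcond_bound)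
      ?_ ?_ (fun _ => max C 0) (integrable_const _) (fun _ => max C 0) (integrable_const _)
      ?_ ?_ ?_
    · filter_upwards [hfs_tend] with x hx
      exact hx.mul tendsto_const_nhds
    · filter_upwards [hfs_tend] with x hx
      exact hx.const_mul _
    · intro n
      refine Eventually.of_forall fun x => ?_
      calc ‖fs n x * T x‖ = ‖fs n x‖ * ‖T x‖ := norm_mul _ _
        _ ≤ max C 0 * 1 := mul_le_mul (hfs_bound n x) (by simpa [Real.norm_eq_abs] using hTabs x)
            (norm_nonneg _) (le_max_right _ _)
        _ = max C 0 := mul_one _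
    · intro n
      filter_upwards [hTcond_bound] with x hx
      calc ‖(μ[T|M]) x * fs n x‖ = ‖(μ[T|M]) x‖ * ‖fs n x‖ := norm_mul _ _
        _ ≤ 1 * max C 0 := mul_le_mul hx (hfs_bound n x) (norm_nonneg _) zero_le_one
        _ = max C 0 := one_mul _
    · intro n
      show μ[fun ω => fs n ω * T ω | M] =ᵐ[μ] μ[fun ω => (μ[T|M]) ω * fs n ω | M]
      have l := hQ (fs n)
      have r : μ[(μ[T|M]) * ⇑(fs n) | M] =ᵐ[μ] μ[T|M] * μ[⇑(fs n) | M] :=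
        condExp_stronglyMeasurable_mul_of_bound₀ hM
          stronglyMeasurable_condExp.aestronglyMeasurable (hφ_int (fs n)) 1 hTcond_bound
      have hfun : (fun ω => (μ[T|M]) ω * fs n ω) = (μ[T|M]) * ⇑(fs n) := rfl
      rw [hfun]
      refine l.trans (EventuallyEq.trans ?_ r.symm)
      exact Eventually.of_forall fun ω => by simp only [Pi.mul_apply]; ring
  have rfinal : μ[(μ[T|M]) * f | M] =ᵐ[μ] μ[T|M] * μ[f | M] :=
    condExp_stronglyMeasurable_mul_of_bound₀ hM
      stronglyMeasurable_condExp.aestronglyMeasurable hf_int 1 hTcond_bound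
  have hfun2 : (fun ω => (μ[T|M]) ω * f ω) = (μ[T|M]) * f := rfl
  rw [hfun2] at main
  filter_upwards [main, rfinal] with ω w1 w2
  rw [w1, w2]
  simp only [Pi.mul_apply]
  ring

end Aux

/-- Key analytic lemma: if `Y ⊥⊥ T | M` and `T` is `{0,1}`-valued, then for every bounded
measurable `h`, `E[h(Y)·T | M] = E[h(Y)|M]·E[T|M]` a.s. -/
lemma keyA {Ω : Type*} {mΩ : MeasurableSpace Ω} [@StandardBorelSpace Ω mΩ]
    (μ : Measure Ω) [IsProbabilityMeasure μ]
    {β : Type*} [mβ : MeasurableSpace β]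
    (Y : Ω → β) (T : Ω → ℝ) (hY : Measurable Y) (hT : Measurable T)
    (hT01 : ∀ ω, T ω = 0 ∨ T ω = 1)
    (M : MeasurableSpace Ω) (hM : M ≤ mΩ)
    (hind : CondIndepFun M hM Y T μ)
    (h : β → ℝ) (hh : Measurable h) (C : ℝ) (hC : ∀ x, |h x| ≤ C) :
    μ[fun ω => h (Y ω) * T ω | M] =ᵐ[μ]
      fun ω => (μ[fun ω' => h (Y ω') | M]) ω * (μ[T | M]) ω := by
  have hTabs : ∀ ω, |T ω| ≤ 1 := fun ω => by rcases hT01 ω with h' | h' <;> simp [h']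
  have hTint : Integrable T μ := integrable_of_bdd hT.aestronglyMeasurable hTabs
  have hTcond_nonneg : 0 ≤ᵐ[μ] μ[T|M] :=
    condExp_nonneg (Eventually.of_forall fun ω => by rcases hT01 ω with h' | h' <;> simp [h'])
  have hTcond_le_one : μ[T|M] ≤ᵐ[μ] fun _ => (1 : ℝ) := by
    have := condExp_mono (m := M) hTint (integrable_const (1 : ℝ))
      (Eventually.of_forall fun ω => by rcases hT01 ω with h' | h' <;> simp [h'])
    rwa [condExp_const hM] at this
  have hTcond_bound : ∀ᵐ ω ∂μ, ‖(μ[T|M]) ω‖ ≤ 1 := by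
    filter_upwards [hTcond_nonneg, hTcond_le_one] with ω h0 h1
    rw [Real.norm_eq_abs, abs_of_nonneg h0]
    exact h1
  have hT1 : Set.indicator (T ⁻¹' {1}) (fun ω => (1 : ℝ)) = T := by
    funext ω
    rcases hT01 ω with h' | h' <;>
      simp [Set.indicator_apply, Set.mem_preimage, h']
  have base : ∀ s : Set Ω, MeasurableSet[MeasurableSpace.comap Y mβ] s →
      μ[Set.indicator (s ∩ T ⁻¹' {1}) (fun ω => (1:ℝ)) | M] =ᵐ[μ]
        fun ω => (μ[Set.indicator s (fun ω => (1:ℝ)) | M]) ω * (μ[T|M]) ω := by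
    rintro s ⟨s', hs', rfl⟩
    have hbase := (condIndepFun_iff_condExp_inter_preimage_eq_mul hY hT).mp hind s' {1}
      hs' (measurableSet_singleton 1)
    rw [hT1] at hbase
    exact hbase
  have hY' : Measurable[MeasurableSpace.comap Y mβ] Y := measurable_iff_comap_le.mpr le_rfl
  have hsm : StronglyMeasurable[MeasurableSpace.comap Y mβ] fun ω => h (Y ω) :=
    (hh.comp hY').stronglyMeasurable
  exact keyA_aux hM hY.comap_le T hT hT01 hTabs hTcond_bound base
    (fun ω => h (Y ω)) hsm C (fun ω => by simpa [Real.norm_eq_abs] using hC (Y ω))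

theorem stmt19 {Ω : Type*} [MeasurableSpace Ω] [StandardBorelSpace Ω]
    (μ : Measure Ω) [IsProbabilityMeasure μ]
    {β ξ : Type*}
    [MeasurableSpace β] [StandardBorelSpace β]
    [MeasurableSpace ξ] [StandardBorelSpace ξ]
    (Y : Ω → β) (X : Ω → ξ) (T : Ω → ℝ)
    (hY : Measurable Y) (hX : Measurable X) (hT : Measurable T)
    (hT01 : ∀ ω, T ω = 0 ∨ T ω = 1)
    (m : MeasurableSpace Ω)
    (hm : m ≤ MeasurableSpace.comap X inferInstance)
    (hYT : CondIndepFun (MeasurableSpace.comap X inferInstance) hX.comap_le Y T μ) :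
    CondIndepFun m (hm.trans hX.comap_le) Y T μ ↔
    ∀ h : β → ℝ, Measurable h → (∃ C : ℝ, ∀ x, |h x| ≤ C) →
      (fun ω => (μ[(fun ω' => h (Y ω')) | m]) ω * (μ[T | m]) ω)
        =ᵐ[μ]
      μ[(fun ω => (μ[(fun ω' => h (Y ω')) | MeasurableSpace.comap X inferInstance]) ω
          * (μ[T | MeasurableSpace.comap X inferInstance]) ω) | m] := by
  have hmΩ := hm.trans hX.comap_le
  -- Tower property: E[ E[h(Y)|σX]·E[T|σX] | m ] = E[h(Y)·T | m]
  have tower : ∀ (h : β → ℝ), Measurable h → ∀ C : ℝ, (∀ x, |h x| ≤ C) →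
      μ[(fun ω => (μ[(fun ω' => h (Y ω')) | MeasurableSpace.comap X inferInstance]) ω
          * (μ[T | MeasurableSpace.comap X inferInstance]) ω) | m]
        =ᵐ[μ] μ[fun ω => h (Y ω) * T ω | m] := by
    intro h hh C hC
    have hx := keyA μ Y T hY hT hT01 _ hX.comap_le hYT h hh C hC
    exact (condExp_congr_ae hx.symm).trans (condExp_condExp_of_le hm hX.comap_le)
  constructor
  · rintro hci h hh ⟨C, hC⟩
    exact ((keyA μ Y T hY hT hT01 m hmΩ hci h hh C hC).symm.trans
      (tower h hh C hC).symm)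
  · intro H
    classical
    have hA : ∀ (h : β → ℝ), Measurable h → ∀ C : ℝ, (∀ x, |h x| ≤ C) →
        μ[fun ω => h (Y ω) * T ω | m] =ᵐ[μ]
          fun ω => (μ[(fun ω' => h (Y ω')) | m]) ω * (μ[T | m]) ω :=
      fun h hh C hC => ((H h hh ⟨C, hC⟩).trans (tower h hh C hC)).symm
    have hTint' : Integrable T μ := integrable_of_bdd hT.aestronglyMeasurable
      (C := 1) (fun ω => by rcases hT01 ω with h' | h' <;> simp [h'])
    rw [condIndepFun_iff_condExp_inter_preimage_eq_mul hY hT]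
    intro s t hs ht
    obtain ⟨a, b, hab⟩ : ∃ a b : ℝ, ∀ ω,
        Set.indicator (T ⁻¹' t) (fun _ => (1:ℝ)) ω = a + b * T ω := by
      refine ⟨if (0:ℝ) ∈ t then 1 else 0,
        (if (1:ℝ) ∈ t then 1 else 0) - (if (0:ℝ) ∈ t then 1 else 0), fun ω => ?_⟩
      rcases hT01 ω with h' | h'
      · rw [Set.indicator_apply]
        simp only [Set.mem_preimage, h', mul_zero, add_zero]
      · rw [Set.indicator_apply]
        simp only [Set.mem_preimage, h', mul_one]
        ring
    have hIval : ∀ ω, |Set.indicator (Y ⁻¹' s) (fun _ => (1:ℝ)) ω| ≤ 1 := by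
      intro ω; by_cases hω : ω ∈ Y ⁻¹' s <;> simp [Set.indicator_apply, hω]
    have hIint : Integrable (Set.indicator (Y ⁻¹' s) (fun _ => (1:ℝ))) μ :=
      integrable_of_bdd (aestronglyMeasurable_const.indicator (hY hs)) hIval
    have hJint : Integrable (fun ω => Set.indicator (Y ⁻¹' s) (fun _ => (1:ℝ)) ω * T ω) μ := by
      refine integrable_of_bdd
        ((aestronglyMeasurable_const.indicator (hY hs)).mul hT.aestronglyMeasurable)
        (C := 1) fun x => ?_
      rcases hT01 x with h' | h' <;> by_cases hω : x ∈ Y ⁻¹' s <;>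
        simp [Set.indicator_apply, hω, h']
    have hsY : ∀ ω, Set.indicator s (fun _ => (1:ℝ)) (Y ω)
        = Set.indicator (Y ⁻¹' s) (fun _ => (1:ℝ)) ω := by
      intro ω; by_cases hω : Y ω ∈ s <;> simp [Set.indicator_apply, hω]
    have hIND := hA (Set.indicator s (fun _ => (1:ℝ))) (measurable_const.indicator hs) 1
      (fun x => by by_cases hx : x ∈ s <;> simp [Set.indicator_apply, hx])
    simp only [hsY] at hIND
    -- hIND : μ[1_{Y⁻¹s}·T | m] =ᵐ μ[1_{Y⁻¹s}|m] · μ[T|m]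
    have hsplit : ∀ ω, Set.indicator (Y ⁻¹' s ∩ T ⁻¹' t) (fun _ => (1:ℝ)) ω
        = a * Set.indicator (Y ⁻¹' s) (fun _ => (1:ℝ)) ω
          + b * (Set.indicator (Y ⁻¹' s) (fun _ => (1:ℝ)) ω * T ω) := by
      intro ω
      by_cases hy : ω ∈ Y ⁻¹' s
      · have hval := hab ω
        simp only [Set.indicator_apply, Set.mem_inter_iff, hy, true_and, if_true,
          Set.mem_preimage] at hval ⊢
        rw [hval]; ring
      · simp [Set.indicator_apply, Set.mem_inter_iff, hy]
    have lhs1 : μ[Set.indicator (Y ⁻¹' s ∩ T ⁻¹' t) (fun ω => (1:ℝ)) | m]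
        =ᵐ[μ] fun ω => a * (μ[Set.indicator (Y ⁻¹' s) (fun ω => (1:ℝ)) | m]) ω
          + b * (μ[fun ω => Set.indicator (Y ⁻¹' s) (fun _ => (1:ℝ)) ω * T ω | m]) ω := by
      have e : Set.indicator (Y ⁻¹' s ∩ T ⁻¹' t) (fun ω => (1:ℝ))
          = (a • Set.indicator (Y ⁻¹' s) (fun ω => (1:ℝ)))
            + b • fun ω => Set.indicator (Y ⁻¹' s) (fun _ => (1:ℝ)) ω * T ω := by
        funext ω
        simpa [Pi.add_apply, Pi.smul_apply, smul_eq_mul] using hsplit ω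
      rw [e]
      refine (condExp_add (hIint.smul a) (hJint.smul b) m).trans ?_
      filter_upwards [condExp_smul (m := m) (μ := μ) a (Set.indicator (Y ⁻¹' s) fun ω => (1:ℝ)),
        condExp_smul (m := m) (μ := μ) b
          (fun ω => Set.indicator (Y ⁻¹' s) (fun _ => (1:ℝ)) ω * T ω)] with ω w1 w2
      simp only [Pi.add_apply, Pi.smul_apply, smul_eq_mul] at w1 w2 ⊢
      rw [w1, w2]
    have rhs1 : μ[Set.indicator (T ⁻¹' t) (fun ω => (1:ℝ)) | m]
        =ᵐ[μ] fun ω => a + b * (μ[T | m]) ω := by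
      have e : Set.indicator (T ⁻¹' t) (fun ω => (1:ℝ)) = (fun _ => a) + b • T := by
        funext ω
        simpa [Pi.add_apply, Pi.smul_apply, smul_eq_mul] using hab ω
      rw [e]
      refine (condExp_add (integrable_const a) (hTint'.smul b) m).trans ?_
      filter_upwards [condExp_smul (m := m) (μ := μ) b T] with ω w1
      simp only [Pi.add_apply, Pi.smul_apply, smul_eq_mul, condExp_const hmΩ] at w1 ⊢
      rw [w1]
    filter_upwards [lhs1, rhs1, hIND] with ω w1 w2 w3
    rw [w1, w2, w3]
    ring
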